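/- Let D ⊣ C : A ⇄ P be an adjunction between categories with pullbacks and σ : S → R a Galois descent morphism. Then the full subcategory Split_R(σ) of A/R consisting of σ-split objects is closed under finite limits in A/R; in particular Split_R(σ) is a cartesian category. -/

import Mathlib

open CategoryTheory Limits

/-- If the unit of an adjunction is an isomorphism at `B` and `B ≅ B'`, then it is an
isomorphism at `B'`. -/
lemma isIso_unit_of_iso {C D : Type*} [Category C] [Category D] {L : C ⥤ D} {Rf : D ⥤ C}
    (adj : L ⊣ Rf) {B B' : C} (e : B ≅ B') (h : IsIso (adj.unit.app B)) :
    IsIso (adj.unit.app B') := by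
  have heq : adj.unit.app B' = e.inv ≫ adj.unit.app B ≫ (L ⋙ Rf).map e.hom := by
    rw [← adj.unit.naturality e.hom]
    simp
  rw [heq]
  infer_instance

/-- If the counit of an adjunction is an isomorphism, then the unit is an isomorphism at
every object in the image of the right adjoint. -/
lemma isIso_unit_app_obj {C D : Type*} [Category C] [Category D] {L : C ⥤ D} {Rf : D ⥤ C}
    (adj : L ⊣ Rf) (hcounit : IsIso adj.counit) (X : D) :
    IsIso (adj.unit.app (Rf.obj X)) := by
  have tri := adj.right_triangle_components X
  haveI : IsIso (adj.counit.app X) := inferInstance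
  haveI : IsIso (adj.unit.app (Rf.obj X) ≫ Rf.map (adj.counit.app X)) := by
    rw [tri]; exact inferInstanceAs (IsIso (𝟙 _))
  exact IsIso.of_isIso_comp_right (adj.unit.app (Rf.obj X)) (Rf.map (adj.counit.app X))

/-- Let `F ⊣ U : A ⇄ P` be an adjunction between categories with
pullbacks and `σ : S ⟶ R` a Galois descent morphism: (i) `σ* = Over.pullback σ` is
monadic; (ii) the counit of the adjunction sliced at `S` is an isomorphism; (iii) for
every `X` in `P/FS` the sliced unit is an isomorphism at `σ*Σ_σ U_S X`.  Then the full
subcategory `Split_R(σ)` of `σ`-split objects of `A/R` is closed under finite limits in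
`A/R`; in particular `Split_R(σ)` is a cartesian category. -/
theorem stmt7 {A P : Type*} [Category A] [Category P] [HasPullbacks A] [HasPullbacks P]
    (F : A ⥤ P) (U : P ⥤ A) (adj : F ⊣ U) {S R : A} (σ : S ⟶ R)
    (US : Over (F.obj S) ⥤ Over S)
    (adjS : (Over.post F : Over S ⥤ Over (F.obj S)) ⊣ US)
    [MonadicRightAdjoint (Over.pullback σ)]
    (hcounit : IsIso adjS.counit)
    (hsplit : ∀ X : Over (F.obj S),
      IsIso (adjS.unit.app ((Over.pullback σ).obj ((Over.map σ).obj (US.obj X))))) :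
    (∀ (J : Type) (_ : SmallCategory J) (_ : FinCategory J),
      ObjectProperty.IsClosedUnderLimitsOfShape
        (fun Aa : Over R => IsIso (adjS.unit.app ((Over.pullback σ).obj Aa)) : ObjectProperty (Over R)) J) ∧
    HasFiniteLimits
      (ObjectProperty.FullSubcategory
        (fun Aa : Over R => IsIso (adjS.unit.app ((Over.pullback σ).obj Aa)))) := by
  -- slice categories have finite limits
  haveI : HasFiniteLimits (Over R) := hasFiniteLimits_of_hasTerminal_and_pullbacks
  haveI : HasFiniteLimits (Over (F.obj S)) := hasFiniteLimits_of_hasTerminal_and_pullbacks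
  -- the pullback functor and `US` preserve limits, being right adjoints
  haveI := (Over.mapPullbackAdj σ).rightAdjoint_preservesLimits
  haveI := adjS.rightAdjoint_preservesLimits
  haveI : PreservesLimitsOfSize.{0, 0} (Over.pullback σ) :=
    preservesLimitsOfSize_shrink _
  haveI : PreservesLimitsOfSize.{0, 0} US := preservesLimitsOfSize_shrink _
  have hclosed : ∀ (J : Type) (_ : SmallCategory J) (_ : FinCategory J),
      ObjectProperty.IsClosedUnderLimitsOfShape
        (fun Aa : Over R => IsIso (adjS.unit.app ((Over.pullback σ).obj Aa)) : ObjectProperty (Over R)) J := by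
    intro J _ _
    constructor
    rintro X ⟨h⟩
    let K := h.diag
    let c : Cone K := Cone.mk _ h.π
    have hc : IsLimit c := h.isLimit
    have hj := h.prop_diag_obj
    -- `(Over.pullback σ).mapCone c` is a limit cone over `D := K ⋙ Over.pullback σ`
    have hc' : IsLimit ((Over.pullback σ).mapCone c) := isLimitOfPreserves _ hc
    let D : J ⥤ Over S := K ⋙ Over.pullback σ
    -- the unit gives a natural isomorphism `D ≅ (D ⋙ Over.post F) ⋙ US`
    have e : D ≅ (D ⋙ (Over.post F : Over S ⥤ Over (F.obj S))) ⋙ US :=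
      NatIso.ofComponents
        (fun j =>
          haveI : IsIso (adjS.unit.app (D.obj j)) := hj j
          asIso (adjS.unit.app (D.obj j)))
        (fun f => by simpa using (adjS.unit.naturality (D.map f)))
    let G : J ⥤ Over (F.obj S) := D ⋙ (Over.post F : Over S ⥤ Over (F.obj S))
    haveI : HasLimit G := inferInstance
    -- `US.obj (limit G)` is a limit of `G ⋙ US`
    have hL : IsLimit (US.mapCone (limit.cone G)) := isLimitOfPreserves US (limit.isLimit G)
    -- hence the pullback of the limit is isomorphic to `US.obj (limit G)`
    have eiso : (Over.pullback σ).obj c.pt ≅ US.obj (limit G) :=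
      IsLimit.conePointsIsoOfNatIso hc' hL e
    exact isIso_unit_of_iso adjS eiso.symm (isIso_unit_app_obj adjS hcounit (limit G))
  refine ⟨hclosed, ⟨fun J hJ hfin => ?_⟩⟩
  haveI := hclosed J hJ hfin
  infer_instance
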